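/- Let F be a finite field with q elements, K = LaurentSeries F, t = single 1 1 ∈ K, and let x ∈ K be nonzero with order(x) ≥ 0. Then the leading coefficient of x (the coefficient of x at its order) equals 1 if and only if there exist y ∈ K and a natural number n ≤ q − 2 such that y ≠ 0, order(y) ≥ 0, and x = t^n · y^{q−1}. (Hence the set R^{(1)} of elements of the valuation ring with angular component 1 is definable with parameter t.) -/

import Mathlib

open PowerSeries HahnSeries

lemma ps_mem_pow_iff {F : Type*} [Field F] (f : PowerSeries F) (n : ℕ) :
    f ∈ (Ideal.span {(PowerSeries.X : PowerSeries F)}) ^ n ↔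
      ∀ m < n, PowerSeries.coeff m f = 0 := by
  rw [Ideal.span_singleton_pow, Ideal.mem_span_singleton, PowerSeries.X_pow_dvd_iff]

lemma psAdicComplete (F : Type*) [Field F] :
    IsAdicComplete (Ideal.span {(PowerSeries.X : PowerSeries F)}) (PowerSeries F) := by
  refine { haus' := ?_, prec' := ?_ }
  · intro f hf
    ext k
    have := hf (k + 1)
    simp only [← Ideal.one_eq_top, smul_eq_mul, mul_one, SModEq.zero, ps_mem_pow_iff] at this
    simpa using this k (by omega)
  · intro f hf
    refine ⟨PowerSeries.mk fun n => PowerSeries.coeff n (f (n + 1)), fun n => ?_⟩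
    simp only [← Ideal.one_eq_top, smul_eq_mul, mul_one, SModEq.sub_mem, ps_mem_pow_iff] at hf ⊢
    intro m hm
    have := hf (show m + 1 ≤ n by omega) m (by omega)
    simp only [map_sub, sub_eq_zero] at this ⊢
    rw [PowerSeries.coeff_mk, ← this]

lemma exists_pow_root {F : Type*} [Field F] (k : ℕ) (hk : k ≠ 0) (hkF : (k : F) ≠ 0)
    (u : PowerSeries F) (hu : PowerSeries.constantCoeff u = 1) :
    ∃ b : PowerSeries F, PowerSeries.constantCoeff b = 1 ∧ b ^ k = u := by
  haveI := psAdicComplete F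
  have H : HenselianRing (PowerSeries F) (Ideal.span {PowerSeries.X}) := inferInstance
  have hmem : (Polynomial.X ^ k - Polynomial.C u).eval 1 ∈ Ideal.span {(PowerSeries.X : PowerSeries F)} := by
    rw [Ideal.mem_span_singleton, PowerSeries.X_dvd_iff]
    simp [hu]
  have hunit : IsUnit (Ideal.Quotient.mk (Ideal.span {(PowerSeries.X : PowerSeries F)})
      ((Polynomial.X ^ k - Polynomial.C u).derivative.eval 1)) := by
    have hd : (Polynomial.X ^ k - Polynomial.C u).derivative.eval 1
        = (k : PowerSeries F) := by
      simp [Polynomial.derivative_X_pow]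
    rw [hd]
    refine IsUnit.map _ ?_
    rw [PowerSeries.isUnit_iff_constantCoeff]
    simpa using hkF
  obtain ⟨a, ha, ha1⟩ := H.is_henselian (Polynomial.X ^ k - Polynomial.C u)
      (Polynomial.monic_X_pow_sub_C u hk) 1 hmem hunit
  refine ⟨a, ?_, ?_⟩
  · rw [Ideal.mem_span_singleton, PowerSeries.X_dvd_iff, map_sub, map_one,
      sub_eq_zero] at ha1
    exact ha1
  · have := ha
    simp only [Polynomial.IsRoot, Polynomial.eval_sub, Polynomial.eval_pow,
      Polynomial.eval_X, Polynomial.eval_C, sub_eq_zero] at this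
    exact this

lemma lc_mul {F : Type*} [Field F] {x y : LaurentSeries F} (hx : x ≠ 0) (hy : y ≠ 0) :
    (x * y).leadingCoeff = x.leadingCoeff * y.leadingCoeff := by
  rw [HahnSeries.leadingCoeff_eq, HahnSeries.order_mul hx hy,
    HahnSeries.coeff_mul_order_add_order]

lemma lc_pow {F : Type*} [Field F] {x : LaurentSeries F} (hx : x ≠ 0) (n : ℕ) :
    (x ^ n).leadingCoeff = x.leadingCoeff ^ n := by
  induction n with
  | zero => simp [HahnSeries.leadingCoeff_one]
  | succ n ih => rw [pow_succ, lc_mul (pow_ne_zero _ hx) hx, ih, pow_succ]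

lemma order_coe_nonneg {F : Type*} [Field F] (b : PowerSeries F) :
    0 ≤ ((b : LaurentSeries F)).order := by
  by_cases hb : (b : LaurentSeries F) = 0
  · simp [hb]
  · by_contra h
    push_neg at h
    have h2 := HahnSeries.coeff_order_eq_zero.not.mpr hb
    rw [PowerSeries.coeff_coe, if_pos h] at h2
    exact h2 rfl

theorem leading_coeff_one_iff (F : Type*) [Field F] [Fintype F]
    (x : LaurentSeries F) (hx : x ≠ 0) (hord : 0 ≤ x.order) :
    x.coeff x.order = 1 ↔
      ∃ (y : LaurentSeries F) (n : ℕ), n ≤ Fintype.card F - 2 ∧ y ≠ 0 ∧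
        0 ≤ y.order ∧
        x = (HahnSeries.single (1 : ℤ) (1 : F)) ^ n * y ^ (Fintype.card F - 1) := by
  set q := Fintype.card F with hq
  have hq2 : 2 ≤ q := Fintype.one_lt_card
  have hkF : ((q - 1 : ℕ) : F) ≠ 0 := by
    have hc : ((q : ℕ) : F) = 0 := by
      rw [hq]; exact FiniteField.cast_card_eq_zero F
    rw [Nat.cast_sub (by omega), hc, Nat.cast_one, zero_sub]
    exact neg_ne_zero.mpr one_ne_zero
  constructor
  · intro h
    have hu : PowerSeries.constantCoeff x.powerSeriesPart = 1 := by
      rw [← PowerSeries.coeff_zero_eq_constantCoeff_apply,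
        LaurentSeries.powerSeriesPart_coeff]
      simpa using h
    obtain ⟨b, hb1, hbk⟩ := exists_pow_root (q - 1) (by omega) hkF _ hu
    have hb0 : b ≠ 0 := by
      intro hb; rw [hb, map_zero] at hb1; exact zero_ne_one hb1
    have hbc0 : (b : LaurentSeries F) ≠ 0 := by
      intro hb
      exact hb0 (HahnSeries.ofPowerSeries_injective (by rw [hb, map_zero]))
    set a : ℕ := x.order.toNat / (q - 1) with ha
    set n : ℕ := x.order.toNat % (q - 1) with hn
    have hnlt : n < q - 1 := Nat.mod_lt _ (by omega)
    have hsne : (HahnSeries.single ((a : ℤ)) (1 : F)) ≠ 0 :=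
      HahnSeries.single_ne_zero one_ne_zero
    refine ⟨HahnSeries.single ((a : ℤ)) (1 : F) * (b : LaurentSeries F), n,
      by omega, mul_ne_zero hsne hbc0, ?_, ?_⟩
    · rw [HahnSeries.order_mul hsne hbc0, HahnSeries.order_single one_ne_zero]
      exact add_nonneg (Int.natCast_nonneg a) (order_coe_nonneg b)
    · have hdm : (q - 1) * a + n = x.order.toNat := Nat.div_add_mod x.order.toNat (q - 1)
      have htn : (x.order.toNat : ℤ) = x.order := Int.toNat_of_nonneg hord
      have hbcast : (b : LaurentSeries F) ^ (q - 1)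
          = ((x.powerSeriesPart : PowerSeries F) : LaurentSeries F) := by
        rw [← hbk, ← PowerSeries.coe_pow]
      rw [mul_pow, hbcast, HahnSeries.single_pow, HahnSeries.single_pow, one_pow,
        one_pow, ← mul_assoc, HahnSeries.single_mul_single, one_mul]
      have hordeq : n • (1 : ℤ) + (q - 1) • (a : ℤ) = x.order := by
        simp only [nsmul_eq_mul, mul_one]
        omega
      rw [hordeq, x.single_order_mul_powerSeriesPart]
  · rintro ⟨y, n, hn, hy0, hyord, hxy⟩
    have htne : (HahnSeries.single (1 : ℤ) (1 : F)) ≠ 0 :=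
      HahnSeries.single_ne_zero one_ne_zero
    have hlcy : y.leadingCoeff ≠ 0 := HahnSeries.leadingCoeff_ne_zero.mpr hy0
    have : x.leadingCoeff = 1 := by
      rw [hxy, lc_mul (pow_ne_zero _ htne) (pow_ne_zero _ hy0), lc_pow htne,
        lc_pow hy0, HahnSeries.leadingCoeff_of_single, one_pow, one_mul,
        FiniteField.pow_card_sub_one_eq_one _ hlcy]
    rw [← HahnSeries.leadingCoeff_eq]
    exact this
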